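/- arXiv:1909.07362 — 4 statements merged into one kernel-verified Lean document; each statement's English description precedes it below -/
import Mathlib

section
/- For any real $x < -1$ and any integer $k \ge 0$, there is a constant $C > 0$ such that for all sufficiently small $\epsilon > 0$, $\int_0^1 (s+\epsilon)^x \left(\log(s/\epsilon + 3)\right)^k\, ds \le C\, \epsilon^{x+1}$. -/
open Real MeasureTheory

theorem stmt2 (x : ℝ) (hx : x < -1) (k : ℕ) :
    ∃ C > (0 : ℝ), ∃ ε₀ > (0 : ℝ), ∀ ε : ℝ, 0 < ε → ε < ε₀ →
      ∫ s in Set.Ioo (0 : ℝ) 1, (s + ε) ^ x * (Real.log (s / ε + 3)) ^ k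
        ≤ C * ε ^ (x + 1) := by
  set δ : ℝ := (-1 - x) / (2 * (k + 1)) with hδdef
  have hδ : 0 < δ := by
    apply div_pos (by linarith) (by positivity)
  set d : ℝ := δ * k with hddef
  have hd0 : 0 ≤ d := by positivity
  set y : ℝ := x + d with hydef
  have hy : y < -1 := by
    have hdk : d ≤ δ * (k + 1) := by
      have : (k : ℝ) ≤ (k : ℝ) + 1 := by linarith
      exact mul_le_mul_of_nonneg_left this hδ.le
    have : δ * (k + 1) = (-1 - x) / 2 := by
      rw [hδdef, div_mul_eq_mul_div, div_eq_div_iff (by positivity) (by norm_num)]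
      ring
    nlinarith [hdk]
  have hy1 : y + 1 < 0 := by linarith
  refine ⟨(3 : ℝ) ^ d / (δ ^ k * (-(y + 1))),
    div_pos (by positivity) (mul_pos (by positivity) (by linarith)), 1, one_pos, ?_⟩
  intro ε hε hε1
  have hA : (0:ℝ) < 3 ^ d * ε ^ (-d) / δ ^ k := by positivity
  set A : ℝ := 3 ^ d * ε ^ (-d) / δ ^ k with hAdef
  -- continuity / integrability
  have hcf : ContinuousOn (fun s : ℝ => (s + ε) ^ x * (Real.log (s / ε + 3)) ^ k)
      (Set.Icc 0 1) := by
    have h1 : ContinuousOn (fun s : ℝ => (s + ε) ^ x) (Set.Icc 0 1) := by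
      apply ContinuousOn.rpow_const (by fun_prop)
      intro s hs
      exact Or.inl (by nlinarith [hs.1])
    have h2 : ContinuousOn (fun s : ℝ => (Real.log (s / ε + 3)) ^ k) (Set.Icc 0 1) := by
      apply ContinuousOn.pow
      apply ContinuousOn.log (by fun_prop)
      intro s hs
      have : 0 ≤ s / ε := div_nonneg hs.1 hε.le
      nlinarith
    exact h1.mul h2
  have hcg : ContinuousOn (fun s : ℝ => A * (s + ε) ^ y) (Set.Icc 0 1) := by
    apply ContinuousOn.mul continuousOn_const
    apply ContinuousOn.rpow_const (by fun_prop)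
    intro s hs
    exact Or.inl (by nlinarith [hs.1])
  have hif : IntegrableOn (fun s : ℝ => (s + ε) ^ x * (Real.log (s / ε + 3)) ^ k)
      (Set.Ioo 0 1) := (hcf.integrableOn_Icc).mono_set Set.Ioo_subset_Icc_self
  have hig : IntegrableOn (fun s : ℝ => A * (s + ε) ^ y) (Set.Ioo 0 1) :=
    (hcg.integrableOn_Icc).mono_set Set.Ioo_subset_Icc_self
  -- pointwise bound
  have hbound : ∀ s ∈ Set.Ioo (0:ℝ) 1,
      (s + ε) ^ x * (Real.log (s / ε + 3)) ^ k ≤ A * (s + ε) ^ y := by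
    intro s hs
    obtain ⟨hs0, hs1⟩ := hs
    have hsε : 0 < s + ε := by linarith
    have hu0 : (0:ℝ) < s / ε + 3 := by positivity
    have hu1 : (1:ℝ) ≤ s / ε + 3 := by
      have : 0 ≤ s / ε := by positivity
      linarith
    have hlog : 0 ≤ Real.log (s / ε + 3) := Real.log_nonneg hu1
    have step1 : Real.log (s / ε + 3) ≤ (s / ε + 3) ^ δ / δ :=
      Real.log_le_rpow_div hu0.le hδ
    have step2 : (Real.log (s / ε + 3)) ^ k ≤ ((s / ε + 3) ^ δ / δ) ^ k :=
      pow_le_pow_left₀ hlog step1 k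
    have hrw : ((s / ε + 3) ^ δ / δ) ^ k = (s / ε + 3) ^ d / δ ^ k := by
      rw [div_pow, ← Real.rpow_natCast ((s / ε + 3) ^ δ) k, ← Real.rpow_mul hu0.le]
    have step3 : s / ε + 3 ≤ 3 * (s + ε) / ε := by
      rw [div_add' _ _ _ hε.ne', div_le_div_iff₀ hε hε]
      nlinarith
    have step4 : (s / ε + 3) ^ d ≤ (3 * (s + ε) / ε) ^ d :=
      Real.rpow_le_rpow hu0.le step3 hd0
    calc (s + ε) ^ x * (Real.log (s / ε + 3)) ^ k
        ≤ (s + ε) ^ x * ((s / ε + 3) ^ d / δ ^ k) := by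
          rw [← hrw]
          exact mul_le_mul_of_nonneg_left step2 (Real.rpow_nonneg hsε.le x)
      _ ≤ (s + ε) ^ x * ((3 * (s + ε) / ε) ^ d / δ ^ k) := by
          apply mul_le_mul_of_nonneg_left _ (Real.rpow_nonneg hsε.le x)
          exact div_le_div_of_nonneg_right step4 (by positivity)
      _ = A * (s + ε) ^ y := by
          rw [hAdef, hydef, Real.div_rpow (by positivity) hε.le,
            Real.mul_rpow (by norm_num) hsε.le, Real.rpow_add hsε,
            Real.rpow_neg hε.le]
          field_simp
  have hmono := setIntegral_mono_on hif hig measurableSet_Ioo hbound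
  -- compute the right-hand integral
  have hint : ∫ s in Set.Ioo (0:ℝ) 1, (s + ε) ^ y
      = ((1 + ε) ^ (y + 1) - ε ^ (y + 1)) / (y + 1) := by
    rw [← MeasureTheory.integral_Ioc_eq_integral_Ioo,
      ← intervalIntegral.integral_of_le (by norm_num : (0:ℝ) ≤ 1)]
    have := intervalIntegral.integral_comp_add_right (fun u : ℝ => u ^ y) ε (a := 0) (b := 1)
    rw [this, zero_add]
    rw [integral_rpow (Or.inr ⟨by linarith, Set.notMem_uIcc_of_lt hε (by linarith)⟩)]
  have hgint : ∫ s in Set.Ioo (0:ℝ) 1, A * (s + ε) ^ y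
      = A * (((1 + ε) ^ (y + 1) - ε ^ (y + 1)) / (y + 1)) := by
    rw [integral_const_mul, hint]
  refine hmono.trans ?_
  rw [hgint]
  -- final bound
  have hpow : ε ^ (-d) * ε ^ (y + 1) = ε ^ (x + 1) := by
    rw [← Real.rpow_add hε]
    congr 1
    rw [hydef]
    ring
  have h1ε : (0:ℝ) ≤ (1 + ε) ^ (y + 1) := Real.rpow_nonneg (by linarith) _
  have hy1' : y + 1 ≠ 0 := by linarith
  have key : A * (((1 + ε) ^ (y + 1) - ε ^ (y + 1)) / (y + 1))
      ≤ A * (ε ^ (y + 1) / (-(y + 1))) := by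
    apply mul_le_mul_of_nonneg_left _ hA.le
    have heq : ((1 + ε) ^ (y + 1) - ε ^ (y + 1)) / (y + 1)
        = (ε ^ (y + 1) - (1 + ε) ^ (y + 1)) / (-(y + 1)) := by
      rw [show ε ^ (y + 1) - (1 + ε) ^ (y + 1)
          = -((1 + ε) ^ (y + 1) - ε ^ (y + 1)) by ring, neg_div_neg_eq]
    rw [heq]
    gcongr
    · linarith
    · linarith
  refine key.trans (le_of_eq ?_)
  calc A * (ε ^ (y + 1) / (-(y + 1)))
      = 3 ^ d / (δ ^ k * (-(y + 1))) * (ε ^ (-d) * ε ^ (y + 1)) := by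
        rw [hAdef]
        field_simp
    _ = 3 ^ d / (δ ^ k * (-(y + 1))) * ε ^ (x + 1) := by rw [hpow]
end

section
/- Let $m \ge 2$ and $\alpha > 0$ with $m\alpha^2 > 1$. Define $I_\epsilon(\alpha) = \int_{[0,2\pi)^m} \prod_{1 \le j < k \le m} \left(\sin\left|\frac{t_j - t_k}{2}\right| + \epsilon\right)^{-2\alpha^2} dt_1 \cdots dt_m$. Then there exist constants $c > 0$ and $\epsilon_0 > 0$ such that for all $0 < \epsilon < \epsilon_0$, $c\, \epsilon^{m - 1 - m(m-1)\alpha^2} \le I_\epsilon(\alpha)$. -/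
open Real MeasureTheory

lemma card_lt_pairs (m : ℕ) :
    2 * (Finset.univ.filter fun p : Fin m × Fin m => p.1 < p.2).card = m * (m - 1) := by
  classical
  have hswap : (Finset.univ.filter fun p : Fin m × Fin m => p.1 < p.2).card
      = (Finset.univ.filter fun p : Fin m × Fin m => p.2 < p.1).card := by
    apply Finset.card_bij (fun p _ => Prod.swap p)
    · intro p hp; simp only [Finset.mem_filter, Finset.mem_univ, true_and] at hp ⊢
      simpa using hp
    · intro p hp q hq hpq; exact Prod.swap_injective hpq
    · intro p hp; exact ⟨Prod.swap p, by simpa using hp, by simp⟩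
  have hunion : (Finset.univ.filter fun p : Fin m × Fin m => p.1 < p.2)
      ∪ (Finset.univ.filter fun p : Fin m × Fin m => p.2 < p.1)
      = (Finset.univ : Finset (Fin m × Fin m)).filter fun p => p.1 ≠ p.2 := by
    ext p
    simp only [Finset.mem_union, Finset.mem_filter, Finset.mem_univ, true_and]
    constructor
    · rintro (h | h); exacts [ne_of_lt h, (ne_of_lt h).symm]
    · intro h; exact lt_or_gt_of_ne h
  have hdisj : Disjoint (Finset.univ.filter fun p : Fin m × Fin m => p.1 < p.2)
      (Finset.univ.filter fun p : Fin m × Fin m => p.2 < p.1) := by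
    rw [Finset.disjoint_left]
    intro p hp hq
    simp only [Finset.mem_filter, Finset.mem_univ, true_and] at hp hq
    exact absurd hq (not_lt_of_gt hp)
  have hoff : (Finset.univ : Finset (Fin m × Fin m)).filter (fun p => p.1 ≠ p.2)
      = (Finset.univ : Finset (Fin m)).offDiag := by
    ext p; simp [Finset.mem_offDiag]
  have hcard := Finset.card_union_of_disjoint hdisj
  rw [hunion, hoff, Finset.offDiag_card, ← hswap] at hcard
  simp only [Finset.card_univ, Fintype.card_fin] at hcard
  rw [Nat.mul_sub, mul_one]
  omega

set_option maxHeartbeats 2000000 in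
theorem stmt5 (m : ℕ) (hm : 2 ≤ m) (α : ℝ) (hα : 0 < α) (h : 1 < (m : ℝ) * α ^ 2) :
    ∃ c > (0 : ℝ), ∃ ε₀ > (0 : ℝ), ∀ ε : ℝ, 0 < ε → ε < ε₀ →
      c * ε ^ ((m : ℝ) - 1 - m * (m - 1) * α ^ 2) ≤
        ∫ t in {t : Fin m → ℝ | ∀ i, t i ∈ Set.Ico (0 : ℝ) (2 * π)},
          ∏ p ∈ Finset.univ.filter (fun p : Fin m × Fin m => p.1 < p.2),
            (Real.sin |(t p.1 - t p.2) / 2| + ε) ^ (-2 * α ^ 2) := by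
  classical
  set M : ℝ := (m : ℝ) * ((m : ℝ) - 1) * α ^ 2 with hMdef
  set P : Finset (Fin m × Fin m) := Finset.univ.filter (fun p : Fin m × Fin m => p.1 < p.2)
    with hP
  refine ⟨2 ^ (-M) / 2, by positivity, 1/2, by norm_num, ?_⟩
  intro ε hε hε2
  set f : (Fin m → ℝ) → ℝ := fun t =>
    ∏ p ∈ P, (Real.sin |(t p.1 - t p.2) / 2| + ε) ^ (-2 * α ^ 2) with hf
  set D : Set (Fin m → ℝ) := {t : Fin m → ℝ | ∀ i, t i ∈ Set.Ico (0 : ℝ) (2 * π)} with hD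
  have hDeq : D = Set.pi Set.univ (fun _ : Fin m => Set.Ico (0 : ℝ) (2 * π)) := by
    ext t; simp [hD, Set.mem_pi]
  have hDmeas : MeasurableSet D := by
    rw [hDeq]; exact MeasurableSet.univ_pi fun _ => measurableSet_Ico
  have hπ : (1 : ℝ) < 2 * π := by nlinarith [Real.pi_gt_three]
  -- the base is at least ε on D
  have hbase : ∀ t ∈ D, ∀ p : Fin m × Fin m,
      ε ≤ Real.sin |(t p.1 - t p.2) / 2| + ε := by
    intro t ht p
    have h1 := ht p.1
    have h2 := ht p.2
    have habs : |(t p.1 - t p.2) / 2| ≤ π := by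
      rw [abs_div, abs_two]
      rw [div_le_iff₀ (by norm_num : (0:ℝ) < 2)]
      have : |t p.1 - t p.2| < 2 * π := by
        rw [abs_sub_lt_iff]
        constructor <;> nlinarith [h1.1, h1.2, h2.1, h2.2]
      linarith
    have := Real.sin_nonneg_of_nonneg_of_le_pi (abs_nonneg _) habs
    linarith
  have hexp : (-2 * α ^ 2 : ℝ) ≤ 0 := by nlinarith
  -- measurability
  have hfmeas : Measurable f := by
    apply Finset.measurable_prod
    intro p _
    fun_prop
  -- integrability on D
  have hDfin : volume D ≠ ⊤ := by
    rw [hDeq, volume_pi_pi]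
    simp only [Real.volume_Ico, sub_zero]
    exact (ENNReal.prod_lt_top fun _ _ => ENNReal.ofReal_lt_top).ne
  have hfub : ∀ t ∈ D, ‖f t‖ ≤ (ε ^ (-2 * α ^ 2)) ^ P.card := by
    intro t ht
    have hnn : 0 ≤ f t := Finset.prod_nonneg fun p _ =>
      Real.rpow_nonneg (le_trans hε.le (hbase t ht p)) _
    rw [Real.norm_of_nonneg hnn, ← Finset.prod_const]
    apply Finset.prod_le_prod
    · intro p _; exact Real.rpow_nonneg (le_trans hε.le (hbase t ht p)) _
    · intro p _; exact Real.rpow_le_rpow_of_nonpos hε (hbase t ht p) hexp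
  have hfint : IntegrableOn f D volume := by
    apply Measure.integrableOn_of_bounded hDfin hfmeas.aestronglyMeasurable
      (M := (ε ^ (-2 * α ^ 2)) ^ P.card)
    rw [ae_restrict_iff' hDmeas]
    exact ae_of_all _ hfub
  have hfnn : 0 ≤ᵐ[volume.restrict D] f :=
    (ae_restrict_iff' hDmeas).2 (ae_of_all _ fun t ht => Finset.prod_nonneg fun p _ =>
      Real.rpow_nonneg (le_trans hε.le (hbase t ht p)) _)
  -- the boxes
  set K : ℕ := ⌊1/ε⌋₊ with hK
  set B : ℕ → Set (Fin m → ℝ) := fun k =>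
    Set.pi Set.univ (fun _ : Fin m => Set.Ico ((k : ℝ) * ε) (((k : ℝ) + 1) * ε)) with hB
  have hKε : (K : ℝ) * ε ≤ 1 := by
    rw [← le_div_iff₀ hε]
    exact Nat.floor_le (by positivity)
  have hBsub : ∀ k < K, B k ⊆ D := by
    intro k hk t ht
    intro i
    have hti := ht i (Set.mem_univ i)
    simp only [Set.mem_Ico] at hti ⊢
    have hk1 : ((k : ℝ) + 1) * ε ≤ (K : ℝ) * ε := by
      have : (k : ℝ) + 1 ≤ (K : ℝ) := by exact_mod_cast hk
      nlinarith
    constructor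
    · have : (0:ℝ) ≤ (k : ℝ) * ε := by positivity
      linarith [hti.1]
    · linarith [hti.2, hKε]
  have hBmeas : ∀ k, MeasurableSet (B k) :=
    fun k => MeasurableSet.univ_pi fun _ => measurableSet_Ico
  have hBdisj : (↑(Finset.range K) : Set ℕ).Pairwise (Function.onFun Disjoint B) := by
    intro k _ l _ hkl
    rw [Function.onFun, Set.disjoint_left]
    intro t htk htl
    have i0 : Fin m := ⟨0, by omega⟩
    have h1 := htk i0 (Set.mem_univ i0)
    have h2 := htl i0 (Set.mem_univ i0)
    simp only [Set.mem_Ico] at h1 h2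
    rcases lt_or_gt_of_ne hkl with hlt | hlt
    · have : (k : ℝ) + 1 ≤ (l : ℝ) := by exact_mod_cast hlt
      nlinarith [h1.2, h2.1]
    · have : (l : ℝ) + 1 ≤ (k : ℝ) := by exact_mod_cast hlt
      nlinarith [h2.2, h1.1]
  have hBvol : ∀ k, (volume (B k)).toReal = ε ^ m := by
    intro k
    rw [hB]
    simp only [volume_pi_pi, Real.volume_Ico]
    have : ((k : ℝ) + 1) * ε - (k : ℝ) * ε = ε := by ring
    rw [this, Finset.prod_const, Finset.card_univ, Fintype.card_fin,
      ← ENNReal.ofReal_pow hε.le, ENNReal.toReal_ofReal (by positivity)]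
  -- lower bound on each box
  have hlow : ∀ k, ∀ t ∈ B k, ((2 * ε) ^ (-2 * α ^ 2)) ^ P.card ≤ f t := by
    intro k t ht
    rw [hf, ← Finset.prod_const]
    apply Finset.prod_le_prod
    · intro p _; exact Real.rpow_nonneg (by positivity) _
    · intro p _
      have h1 := ht p.1 (Set.mem_univ p.1)
      have h2 := ht p.2 (Set.mem_univ p.2)
      simp only [Set.mem_Ico] at h1 h2
      have hd : |t p.1 - t p.2| ≤ ε := by
        rw [abs_sub_le_iff]
        constructor <;> nlinarith [h1.1, h1.2, h2.1, h2.2]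
      have habs : |(t p.1 - t p.2) / 2| ≤ ε / 2 := by
        rw [abs_div, abs_two]
        linarith
      have hsin : Real.sin |(t p.1 - t p.2) / 2| ≤ ε / 2 :=
        le_trans (Real.sin_le (abs_nonneg _)) habs
      have hb : Real.sin |(t p.1 - t p.2) / 2| + ε ≤ 2 * ε := by linarith
      have hbpos : 0 < Real.sin |(t p.1 - t p.2) / 2| + ε := by
        have := Real.sin_nonneg_of_nonneg_of_le_pi (abs_nonneg ((t p.1 - t p.2) / 2))
          (le_trans habs (by nlinarith [Real.pi_gt_three]))
        linarith
      exact Real.rpow_le_rpow_of_nonpos hbpos hb hexp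
  -- integral over each box
  set C₀ : ℝ := ((2 * ε) ^ (-2 * α ^ 2 : ℝ)) ^ P.card with hC₀
  have hC₀pos : 0 < C₀ := pow_pos (Real.rpow_pos_of_pos (by linarith) _) _
  have hboxint : ∀ k < K, ε ^ m * C₀ ≤ ∫ t in B k, f t := by
    intro k hk
    have hint : IntegrableOn f (B k) volume := hfint.mono_set (hBsub k hk)
    have : ∫ t in B k, C₀ ≤ ∫ t in B k, f t := by
      apply setIntegral_mono_on ((integrableOn_const_iff (C := C₀)).mpr (Or.inr ?_)) hint (hBmeas k)
        (hlow k)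
      calc volume (B k) ≤ volume D := measure_mono (hBsub k hk)
        _ < ⊤ := hDfin.lt_top
    rw [setIntegral_const, smul_eq_mul, measureReal_def, hBvol k] at this
    exact this
  -- sum over boxes
  have hsum : (K : ℝ) * (ε ^ m * C₀) ≤ ∫ t in D, f t := by
    have hunion_sub : (⋃ k ∈ Finset.range K, B k) ⊆ D := by
      intro t ht
      simp only [Set.mem_iUnion, Finset.mem_range] at ht
      obtain ⟨k, hk, htk⟩ := ht
      exact hBsub k hk htk
    have h1 : ∫ t in ⋃ k ∈ Finset.range K, B k, f t = ∑ k ∈ Finset.range K, ∫ t in B k, f t :=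
      integral_biUnion_finset (Finset.range K) (fun k _ => hBmeas k) hBdisj
        (fun k hk => hfint.mono_set (hBsub k (Finset.mem_range.mp hk)))
    have h2 : ∫ t in ⋃ k ∈ Finset.range K, B k, f t ≤ ∫ t in D, f t :=
      setIntegral_mono_set hfint hfnn (HasSubset.Subset.eventuallyLE hunion_sub)
    have h3 : (K : ℝ) * (ε ^ m * C₀) ≤ ∑ k ∈ Finset.range K, ∫ t in B k, f t := by
      calc (K : ℝ) * (ε ^ m * C₀) = ∑ _k ∈ Finset.range K, ε ^ m * C₀ := by
            rw [Finset.sum_const, Finset.card_range, nsmul_eq_mul]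
        _ ≤ ∑ k ∈ Finset.range K, ∫ t in B k, f t :=
            Finset.sum_le_sum fun k hk => hboxint k (Finset.mem_range.mp hk)
    linarith [h1 ▸ h3, h2]
  -- identify C₀ with (2ε)^(-M)
  have hcard : ((P.card : ℝ)) * (2 * α ^ 2) = M := by
    have := card_lt_pairs m
    rw [← hP] at this
    have hc := congrArg (Nat.cast : ℕ → ℝ) this
    push_cast [Nat.cast_sub (by omega : 1 ≤ m)] at hc
    rw [hMdef]; nlinarith [hc]
  have hC₀eq : C₀ = 2 ^ (-M) * ε ^ (-M) := by
    rw [hC₀, ← Real.rpow_natCast ((2 * ε) ^ (-2 * α ^ 2 : ℝ)) P.card,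
      ← Real.rpow_mul (by positivity)]
    have : (-2 * α ^ 2) * (P.card : ℝ) = -M := by rw [← hcard]; ring
    rw [this, Real.mul_rpow (by norm_num) hε.le]
  -- final arithmetic
  have hKge : 1 / (2 * ε) ≤ (K : ℝ) := by
    have h1 : 1/ε - 1 < (K : ℝ) := Nat.sub_one_lt_floor (1/ε)
    have h2 : 1 / (2 * ε) ≤ 1/ε - 1 := by
      rw [div_sub' (ne_of_gt hε), div_le_div_iff₀ (by positivity) hε]
      nlinarith
    linarith
  have hfinal : 2 ^ (-M) / 2 * ε ^ ((m : ℝ) - 1 - M) ≤ (K : ℝ) * (ε ^ m * C₀) := by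
    have hεm : (ε : ℝ) ^ m = ε ^ ((m : ℝ)) := (Real.rpow_natCast ε m).symm
    have key : ε⁻¹ * (ε ^ ((m : ℝ)) * ε ^ (-M)) = ε ^ ((m : ℝ) - 1 - M) := by
      rw [← Real.rpow_neg_one ε, ← Real.rpow_add hε, ← Real.rpow_add hε]
      congr 1; ring
    have heq : 1 / (2 * ε) * (ε ^ m * C₀) = 2 ^ (-M) / 2 * ε ^ ((m : ℝ) - 1 - M) := by
      rw [hC₀eq, hεm, ← key, one_div, mul_inv]
      ring
    rw [← heq]
    apply mul_le_mul_of_nonneg_right hKge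
    positivity
  calc 2 ^ (-M) / 2 * ε ^ ((m : ℝ) - 1 - M) ≤ (K : ℝ) * (ε ^ m * C₀) := hfinal
    _ ≤ ∫ t in D, f t := hsum
end

section
/- Let $m \ge 2$ and $\alpha > 0$ with $2\alpha^2 > 1$. Then $\int_{[0,1)^{m-1}} \prod_{1 \le j \le k \le m-1} \left(\sum_{i=j}^k s_i + \epsilon\right)^{-2\alpha^2} ds_1 \cdots ds_{m-1} = \mathcal{O}\left(\epsilon^{(m-1)(1 - m\alpha^2)}\right)$ as $\epsilon \to 0$. -/
open Real MeasureTheory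

lemma aux_int {r δ : ℝ} (hr : 1 < r) (hδ : 0 < δ) :
    ∫ x in Set.Ico (0:ℝ) 1, (x + δ) ^ (-r) ≤ δ ^ (1 - r) / (r - 1) := by
  have h1 : ∫ x in Set.Ico (0:ℝ) 1, (x + δ) ^ (-r)
      = ∫ x in (0:ℝ)..1, (x + δ) ^ (-r) := by
    rw [intervalIntegral.integral_of_le zero_le_one]
    exact setIntegral_congr_set MeasureTheory.Ico_ae_eq_Ioc
  have h2 : (∫ x in (0:ℝ)..1, (x + δ) ^ (-r)) = ∫ x in (0+δ)..(1+δ), x ^ (-r) :=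
    intervalIntegral.integral_comp_add_right (fun x => x ^ (-r)) δ
  have h3 : (∫ x in (0+δ)..(1+δ), x ^ (-r))
      = ((1+δ) ^ (-r+1) - (0+δ) ^ (-r+1)) / (-r+1) := by
    apply integral_rpow
    right
    refine ⟨by intro he; nlinarith, ?_⟩
    rw [Set.uIcc_of_le (by linarith), Set.mem_Icc]
    push_neg
    intro h0; linarith
  rw [h1, h2, h3]
  have hd : (0:ℝ) < r - 1 := by linarith
  have he : (-r + 1 : ℝ) = 1 - r := by ring
  rw [he, zero_add]
  have h4 : ((1+δ) ^ (1-r) - δ ^ (1-r)) / (1 - r)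
      = (δ ^ (1-r) - (1+δ) ^ (1-r)) / (r - 1) := by
    rw [show (1 - r : ℝ) = -(r-1) by ring, div_neg, ← neg_div, neg_sub]
  rw [h4]
  gcongr
  exact sub_le_self _ (rpow_nonneg (by linarith) _)

lemma aux_card (n : ℕ) :
    (Finset.univ.filter fun p : Fin n × Fin n => p.1 ≤ p.2).card * 2 = n * (n+1) := by
  classical
  have h1 : (Finset.univ.filter fun p : Fin n × Fin n => p.1 ≤ p.2).card
      = ∑ j : Fin n, (n - (j:ℕ)) := by
    rw [Finset.card_filter, ← Finset.univ_product_univ, Finset.sum_product]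
    refine Finset.sum_congr rfl fun j _ => ?_
    rw [← Finset.card_filter]
    have : Finset.univ.filter (fun k : Fin n => j ≤ k) = Finset.Ici j := by
      ext k; simp
    rw [this, Fin.card_Ici]
  rw [h1, Fin.sum_univ_eq_sum_range (fun j => n - j) n]
  have h2 : ∑ j ∈ Finset.range n, (n - j) = ∑ j ∈ Finset.range n, (j + 1) := by
    rw [← Finset.sum_range_reflect (fun j => n - j) n]
    refine Finset.sum_congr rfl fun j hj => ?_
    have := Finset.mem_range.mp hj
    omega
  rw [h2, Finset.sum_add_distrib, Finset.sum_const, Finset.card_range, smul_eq_mul, mul_one,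
    add_mul, Finset.sum_range_id_mul_two]
  cases n with
  | zero => rfl
  | succ k =>
      rw [Nat.succ_sub_one]
      ring

lemma aux_pointwise (n : ℕ) (q ε δ : ℝ) (hq : 0 < q) (hε : 0 < ε) (hδ : 0 < δ)
    (hδε : ∀ k : ℕ, 1 ≤ k → k ≤ n → δ ≤ ε / k)
    (s : Fin n → ℝ) (hs : ∀ i, 0 ≤ s i) :
    ∏ p ∈ Finset.univ.filter (fun p : Fin n × Fin n => p.1 ≤ p.2),
        ((∑ i ∈ Finset.Icc p.1 p.2, s i) + ε) ^ (-q)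
      ≤ ∏ i : Fin n, (s i + δ) ^
          (-(q * ∑ p ∈ Finset.univ.filter (fun p : Fin n × Fin n => p.1 ≤ p.2),
             (if i ∈ Finset.Icc p.1 p.2 then ((Finset.Icc p.1 p.2).card : ℝ)⁻¹ else 0))) := by
  classical
  set P := Finset.univ.filter (fun p : Fin n × Fin n => p.1 ≤ p.2) with hP
  have key : ∀ p ∈ P, ((∑ i ∈ Finset.Icc p.1 p.2, s i) + ε) ^ (-q)
      ≤ ∏ i ∈ Finset.Icc p.1 p.2,
          (s i + δ) ^ (((Finset.Icc p.1 p.2).card : ℝ)⁻¹ * (-q)) := by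
    intro p hp
    have hple : p.1 ≤ p.2 := (Finset.mem_filter.mp hp).2
    set t := Finset.Icc p.1 p.2 with ht
    have hk : 1 ≤ t.card :=
      Finset.card_pos.mpr ⟨p.1, Finset.mem_Icc.mpr ⟨le_refl _, hple⟩⟩
    have hkR : (0:ℝ) < (t.card : ℝ) := by exact_mod_cast hk
    have hkn : t.card ≤ n := (Finset.card_le_univ t).trans_eq (Finset.card_fin _)
    have hsum : ∑ _i ∈ t, ((t.card:ℝ))⁻¹ = 1 := by
      rw [Finset.sum_const, nsmul_eq_mul, mul_inv_cancel₀ (ne_of_gt hkR)]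
    have hgm := Real.geom_mean_le_arith_mean_weighted t (fun _ => ((t.card:ℝ))⁻¹)
        (fun i => s i + ε / t.card) (fun i _ => by positivity) hsum
        (fun i _ => by have := hs i; positivity)
    have hrhs : ∑ i ∈ t, ((t.card:ℝ))⁻¹ * (s i + ε / t.card) ≤ (∑ i ∈ t, s i) + ε := by
      rw [← Finset.mul_sum]
      have h5 : ∑ i ∈ t, (s i + ε / t.card) = (∑ i ∈ t, s i) + ε := by
        rw [Finset.sum_add_distrib, Finset.sum_const, nsmul_eq_mul]
        congr 1
        field_simp
      rw [h5]
      have hpos : 0 ≤ (∑ i ∈ t, s i) + ε := by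
        have : 0 ≤ ∑ i ∈ t, s i := Finset.sum_nonneg fun i _ => hs i
        linarith
      nth_rewrite 2 [← one_mul ((∑ i ∈ t, s i) + ε)]
      apply mul_le_mul_of_nonneg_right ?_ hpos
      exact inv_le_one_of_one_le₀ (by exact_mod_cast hk)
    have hGMpos : 0 < ∏ i ∈ t, (s i + ε / t.card) ^ ((t.card:ℝ))⁻¹ :=
      Finset.prod_pos fun i _ =>
        Real.rpow_pos_of_pos (by have := hs i; positivity) _
    have h6 : ((∑ i ∈ t, s i) + ε) ^ (-q)
        ≤ (∏ i ∈ t, (s i + ε / t.card) ^ ((t.card:ℝ))⁻¹) ^ (-q) :=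
      Real.rpow_le_rpow_of_nonpos hGMpos (hgm.trans hrhs) (by linarith)
    have h7 : (∏ i ∈ t, (s i + ε / t.card) ^ ((t.card:ℝ))⁻¹) ^ (-q)
        = ∏ i ∈ t, (s i + ε / t.card) ^ (((t.card:ℝ))⁻¹ * (-q)) := by
      rw [← Real.finset_prod_rpow t _
        (fun i _ => Real.rpow_nonneg (by have := hs i; positivity) _) (-q)]
      refine Finset.prod_congr rfl fun i _ => ?_
      rw [← Real.rpow_mul (by have := hs i; positivity)]
    have h8 : ∀ i ∈ t, (s i + ε / t.card) ^ (((t.card:ℝ))⁻¹ * (-q))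
        ≤ (s i + δ) ^ (((t.card:ℝ))⁻¹ * (-q)) := by
      intro i _
      apply Real.rpow_le_rpow_of_nonpos (by have := hs i; positivity) ?_ ?_
      · have h9 := hδε t.card hk hkn
        have := hs i
        linarith
      · exact mul_nonpos_of_nonneg_of_nonpos (inv_nonneg.mpr hkR.le) (by linarith)
    calc ((∑ i ∈ t, s i) + ε) ^ (-q)
        ≤ (∏ i ∈ t, (s i + ε / t.card) ^ ((t.card:ℝ))⁻¹) ^ (-q) := h6
      _ = ∏ i ∈ t, (s i + ε / t.card) ^ (((t.card:ℝ))⁻¹ * (-q)) := h7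
      _ ≤ ∏ i ∈ t, (s i + δ) ^ (((t.card:ℝ))⁻¹ * (-q)) :=
          Finset.prod_le_prod
            (fun i _ => Real.rpow_nonneg (by have := hs i; positivity) _) h8
  calc ∏ p ∈ P, ((∑ i ∈ Finset.Icc p.1 p.2, s i) + ε) ^ (-q)
      ≤ ∏ p ∈ P, ∏ i ∈ Finset.Icc p.1 p.2,
          (s i + δ) ^ (((Finset.Icc p.1 p.2).card : ℝ)⁻¹ * (-q)) := by
        refine Finset.prod_le_prod (fun p _ => ?_) key
        refine Real.rpow_nonneg ?_ _
        have : 0 ≤ ∑ i ∈ Finset.Icc p.1 p.2, s i :=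
          Finset.sum_nonneg fun i _ => hs i
        linarith
    _ = ∏ p ∈ P, ∏ i : Fin n,
          (s i + δ) ^ (if i ∈ Finset.Icc p.1 p.2
            then ((Finset.Icc p.1 p.2).card : ℝ)⁻¹ * (-q) else 0) := by
        refine Finset.prod_congr rfl fun p _ => ?_
        have hfe : Finset.univ.filter (fun i => i ∈ Finset.Icc p.1 p.2)
            = Finset.Icc p.1 p.2 := by ext i; simp
        symm
        calc ∏ i : Fin n, (s i + δ) ^ (if i ∈ Finset.Icc p.1 p.2
              then ((Finset.Icc p.1 p.2).card : ℝ)⁻¹ * (-q) else 0)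
            = ∏ i : Fin n, (if i ∈ Finset.Icc p.1 p.2
              then (s i + δ) ^ (((Finset.Icc p.1 p.2).card : ℝ)⁻¹ * (-q)) else 1) := by
              refine Finset.prod_congr rfl fun i _ => ?_
              split_ifs with hi
              · rfl
              · rw [Real.rpow_zero]
          _ = ∏ i ∈ Finset.univ.filter (fun i => i ∈ Finset.Icc p.1 p.2),
              (s i + δ) ^ (((Finset.Icc p.1 p.2).card : ℝ)⁻¹ * (-q)) :=
              (Finset.prod_filter _ _).symm
          _ = ∏ i ∈ Finset.Icc p.1 p.2,
              (s i + δ) ^ (((Finset.Icc p.1 p.2).card : ℝ)⁻¹ * (-q)) := by rw [hfe]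
    _ = ∏ i : Fin n, ∏ p ∈ P,
          (s i + δ) ^ (if i ∈ Finset.Icc p.1 p.2
            then ((Finset.Icc p.1 p.2).card : ℝ)⁻¹ * (-q) else 0) := Finset.prod_comm
    _ = _ := by
        refine Finset.prod_congr rfl fun i _ => ?_
        rw [← Real.rpow_sum_of_pos (by have := hs i; positivity) _ P]
        congr 1
        have : ∀ p ∈ P, (if i ∈ Finset.Icc p.1 p.2
            then ((Finset.Icc p.1 p.2).card : ℝ)⁻¹ * (-q) else 0)
            = (if i ∈ Finset.Icc p.1 p.2
              then ((Finset.Icc p.1 p.2).card : ℝ)⁻¹ else 0) * (-q) := by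
          intro p _; split_ifs <;> ring
        rw [Finset.sum_congr rfl this, ← Finset.sum_mul]
        ring

theorem stmt7 (m : ℕ) (hm : 2 ≤ m) (α : ℝ) (hα : 0 < α) (h : 1 < 2 * α ^ 2) :
    ∃ C > (0 : ℝ), ∃ ε₀ > (0 : ℝ), ∀ ε : ℝ, 0 < ε → ε < ε₀ →
      (∫ s in {s : Fin (m - 1) → ℝ | ∀ i, s i ∈ Set.Ico (0 : ℝ) 1},
          ∏ p ∈ Finset.univ.filter
              (fun p : Fin (m - 1) × Fin (m - 1) => p.1 ≤ p.2),
            ((∑ i ∈ Finset.Icc p.1 p.2, s i) + ε) ^ (-2 * α ^ 2)) ≤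
        C * ε ^ (((m : ℝ) - 1) * (1 - m * α ^ 2)) := by
  classical
  have hq : (0:ℝ) < 2 * α ^ 2 := by nlinarith
  set P := Finset.univ.filter (fun p : Fin (m - 1) × Fin (m - 1) => p.1 ≤ p.2) with hP
  set c : Fin (m - 1) → ℝ := fun i => ∑ p ∈ P,
    (if i ∈ Finset.Icc p.1 p.2 then ((Finset.Icc p.1 p.2).card : ℝ)⁻¹ else 0) with hc
  have hc1 : ∀ i, 1 ≤ c i := by
    intro i
    have hmem : ((i, i) : Fin (m-1) × Fin (m-1)) ∈ P :=
      Finset.mem_filter.mpr ⟨Finset.mem_univ _, le_refl i⟩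
    have hterm : (if i ∈ Finset.Icc ((i,i) : Fin (m-1) × Fin (m-1)).1 (i,i).2
        then ((Finset.Icc ((i,i) : Fin (m-1) × Fin (m-1)).1 (i,i).2).card : ℝ)⁻¹ else 0) = 1 := by
      simp [Finset.Icc_self]
    have := Finset.single_le_sum (f := fun p : Fin (m-1) × Fin (m-1) =>
        (if i ∈ Finset.Icc p.1 p.2 then ((Finset.Icc p.1 p.2).card : ℝ)⁻¹ else 0))
      (fun p _ => by split_ifs <;> positivity) hmem
    dsimp only at this
    rw [hterm] at this
    exact this
  have hr : ∀ i, 1 < 2 * α ^ 2 * c i := by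
    intro i
    calc (1:ℝ) < 2 * α ^ 2 := h
      _ = 2 * α ^ 2 * 1 := by ring
      _ ≤ 2 * α ^ 2 * c i := by
          apply mul_le_mul_of_nonneg_left (hc1 i) hq.le
  have hsumc : ∑ i, c i = (P.card : ℝ) := by
    rw [hc]
    rw [Finset.sum_comm]
    have : ∀ p ∈ P, (∑ i : Fin (m-1),
        (if i ∈ Finset.Icc p.1 p.2 then ((Finset.Icc p.1 p.2).card : ℝ)⁻¹ else 0)) = 1 := by
      intro p hp
      have hple : p.1 ≤ p.2 := (Finset.mem_filter.mp hp).2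
      have hk : 1 ≤ (Finset.Icc p.1 p.2).card :=
        Finset.card_pos.mpr ⟨p.1, Finset.mem_Icc.mpr ⟨le_refl _, hple⟩⟩
      have hkR : (0:ℝ) < ((Finset.Icc p.1 p.2).card : ℝ) := by exact_mod_cast hk
      rw [Finset.sum_ite_mem, Finset.univ_inter, Finset.sum_const, nsmul_eq_mul,
        mul_inv_cancel₀ (ne_of_gt hkR)]
    rw [Finset.sum_congr rfl this, Finset.sum_const, nsmul_eq_mul, mul_one]
  have hcardnat := aux_card (m - 1)
  have hcardR : (P.card : ℝ) = ((m:ℝ) - 1) * m / 2 := by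
    have h1 : m - 1 + 1 = m := by omega
    rw [h1] at hcardnat
    rw [← hP] at hcardnat
    have h2 : ((P.card * 2 : ℕ) : ℝ) = (((m - 1) * m : ℕ) : ℝ) := Nat.cast_inj.mpr (by omega)
    push_cast [Nat.cast_sub (by omega : 1 ≤ m)] at h2
    linarith
  have hT : ∑ i, (1 - 2 * α ^ 2 * c i) = ((m:ℝ) - 1) * (1 - m * α ^ 2) := by
    rw [Finset.sum_sub_distrib, Finset.sum_const, Finset.card_univ, Fintype.card_fin,
      ← Finset.mul_sum, hsumc, hcardR, nsmul_eq_mul, mul_one,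
      Nat.cast_sub (by omega : 1 ≤ m), Nat.cast_one]
    ring
  set T : ℝ := ((m:ℝ) - 1) * (1 - m * α ^ 2) with hTdef
  have hCpos : 0 < (∏ i : Fin (m-1), (2 * α ^ 2 * c i - 1)⁻¹) / (m:ℝ) ^ T := by
    apply div_pos
    · exact Finset.prod_pos fun i _ => inv_pos.mpr (by linarith [hr i])
    · exact Real.rpow_pos_of_pos (by positivity) _
  refine ⟨_, hCpos, 1, one_pos, ?_⟩
  intro ε hε hε1
  set δ : ℝ := ε / m with hδdef
  have hmpos : (0:ℝ) < m := by positivity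
  have hδ : 0 < δ := by positivity
  have hδε : ∀ k : ℕ, 1 ≤ k → k ≤ m - 1 → δ ≤ ε / k := by
    intro k hk1 hk2
    have hkpos : (0:ℝ) < k := by exact_mod_cast hk1
    have hkm : (k:ℝ) ≤ m := by
      have : k ≤ m := by omega
      exact_mod_cast this
    exact div_le_div_of_nonneg_left hε.le hkpos hkm
  set S := {s : Fin (m - 1) → ℝ | ∀ i, s i ∈ Set.Ico (0 : ℝ) 1} with hSdef
  have hSeq : S = Set.pi Set.univ (fun _ : Fin (m-1) => Set.Ico (0:ℝ) 1) := by
    ext s; simp [Set.mem_pi, hSdef]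
  have hS : MeasurableSet S := by
    rw [hSeq]; exact MeasurableSet.univ_pi fun _ => measurableSet_Ico
  set H : Fin (m - 1) → ℝ → ℝ := fun i x => (x + δ) ^ (-(2 * α ^ 2 * c i)) with hH
  have hHint : ∀ i, IntegrableOn (H i) (Set.Ico (0:ℝ) 1) := by
    intro i
    have hcont : ContinuousOn (H i) (Set.Icc (0:ℝ) 1) := by
      apply ContinuousOn.rpow_const
      · exact (continuous_id.add continuous_const).continuousOn
      · intro x hx
        left
        have := hx.1
        positivity
    exact hcont.integrableOn_Icc.mono_set Set.Ico_subset_Icc_self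
  have hIndInt : ∀ i, Integrable ((Set.Ico (0:ℝ) 1).indicator (H i)) := fun i =>
    (integrable_indicator_iff measurableSet_Ico).mpr (hHint i)
  have hGInd : Set.indicator S (fun s => ∏ i, H i (s i))
      = fun s => ∏ i, (Set.Ico (0:ℝ) 1).indicator (H i) (s i) := by
    funext s
    by_cases hsS : s ∈ S
    · rw [Set.indicator_of_mem hsS]
      exact Finset.prod_congr rfl fun i _ => (Set.indicator_of_mem (hsS i) _).symm
    · rw [Set.indicator_of_notMem hsS]
      symm
      have : ∃ i, s i ∉ Set.Ico (0:ℝ) 1 := by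
        by_contra hcon
        push_neg at hcon
        exact hsS hcon
      obtain ⟨i0, hi0⟩ := this
      exact Finset.prod_eq_zero (Finset.mem_univ i0) (Set.indicator_of_notMem hi0 _)
  have hGIntOn : IntegrableOn (fun s => ∏ i, H i (s i)) S := by
    have hInd : Integrable (Set.indicator S (fun s => ∏ i, H i (s i))) := by
      rw [hGInd]
      exact Integrable.fintype_prod (𝕜 := ℝ) fun i => hIndInt i
    exact (integrable_indicator_iff hS).mp hInd
  have step1 : (∫ s in S, ∏ p ∈ P, ((∑ i ∈ Finset.Icc p.1 p.2, s i) + ε) ^ (-2 * α ^ 2))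
      ≤ ∫ s in S, ∏ i, H i (s i) := by
    refine integral_mono_of_nonneg ?_ hGIntOn ?_
    · refine (ae_restrict_iff' hS).mpr (ae_of_all _ fun s hsS => ?_)
      refine Finset.prod_nonneg fun p _ => Real.rpow_nonneg ?_ _
      have h0 : 0 ≤ ∑ i ∈ Finset.Icc p.1 p.2, s i :=
        Finset.sum_nonneg fun i _ => (hsS i).1
      linarith
    · refine (ae_restrict_iff' hS).mpr (ae_of_all _ fun s hsS => ?_)
      have := aux_pointwise (m-1) (2 * α ^ 2) ε δ hq hε hδ hδε s (fun i => (hsS i).1)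
      simpa only [neg_mul] using this
  have step2 : (∫ s in S, ∏ i, H i (s i)) = ∏ i, ∫ x in Set.Ico (0:ℝ) 1, H i x := by
    rw [← integral_indicator hS, hGInd, volume_pi,
      MeasureTheory.integral_fin_nat_prod_eq_prod
        (fun i => (Set.Ico (0:ℝ) 1).indicator (H i))]
    exact Finset.prod_congr rfl fun i _ => integral_indicator measurableSet_Ico
  have step3 : (∏ i, ∫ x in Set.Ico (0:ℝ) 1, H i x)
      ≤ ∏ i : Fin (m-1), δ ^ (1 - 2 * α ^ 2 * c i) / (2 * α ^ 2 * c i - 1) := by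
    refine Finset.prod_le_prod (fun i _ => ?_) (fun i _ => aux_int (hr i) hδ)
    refine setIntegral_nonneg measurableSet_Ico fun x hx => Real.rpow_nonneg ?_ _
    have := hx.1
    positivity
  have step4 : (∏ i : Fin (m-1), δ ^ (1 - 2 * α ^ 2 * c i) / (2 * α ^ 2 * c i - 1))
      = (∏ i : Fin (m-1), (2 * α ^ 2 * c i - 1)⁻¹) * δ ^ T := by
    rw [Finset.prod_div_distrib, ← Real.rpow_sum_of_pos hδ, hT, div_eq_mul_inv, mul_comm,
      ← Finset.prod_inv_distrib]
  have step5 : δ ^ T = ε ^ T / (m:ℝ) ^ T := by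
    rw [hδdef, Real.div_rpow hε.le (Nat.cast_nonneg m)]
  calc (∫ s in S, ∏ p ∈ P, ((∑ i ∈ Finset.Icc p.1 p.2, s i) + ε) ^ (-2 * α ^ 2))
      ≤ ∫ s in S, ∏ i, H i (s i) := step1
    _ = ∏ i, ∫ x in Set.Ico (0:ℝ) 1, H i x := step2
    _ ≤ ∏ i : Fin (m-1), δ ^ (1 - 2 * α ^ 2 * c i) / (2 * α ^ 2 * c i - 1) := step3
    _ = (∏ i : Fin (m-1), (2 * α ^ 2 * c i - 1)⁻¹) * δ ^ T := step4
    _ = (∏ i : Fin (m-1), (2 * α ^ 2 * c i - 1)⁻¹) / (m:ℝ) ^ T * ε ^ T := by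
        rw [step5]; ring
end

section
/- Let $m \ge 2$ and $\alpha > 0$ with $m\alpha^2 = 1$. Define $I_\epsilon(\alpha) = \int_{[0,2\pi)^m} \prod_{1 \le j < k \le m} \left(\sin\left|\frac{t_j-t_k}{2}\right| + \epsilon\right)^{-2\alpha^2} dt_1 \cdots dt_m$. Then there is a constant $\hat c_0$ such that for all sufficiently small $\epsilon > 0$, $\log(1/\epsilon) - \hat c_0 \le I_\epsilon(\alpha)$. -/
open Real MeasureTheory

lemma two_mul_card_pairs (m : ℕ) :
    2 * (Finset.univ.filter (fun p : Fin m × Fin m => p.1 < p.2)).card + m = m * m := by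
  classical
  have hswap : (Finset.univ.filter (fun p : Fin m × Fin m => p.1 < p.2)).card
      = (Finset.univ.filter (fun p : Fin m × Fin m => p.2 < p.1)).card := by
    apply Finset.card_bij (fun p _ => Prod.swap p)
    · intro a ha
      simp only [Finset.mem_filter, Finset.mem_univ, true_and] at ha ⊢
      exact ha
    · intro a _ b _ hab
      exact Prod.swap_injective hab
    · intro b hb
      simp only [Finset.mem_filter, Finset.mem_univ, true_and] at hb
      exact ⟨b.swap, by simp only [Finset.mem_filter, Finset.mem_univ, true_and,
        Prod.fst_swap, Prod.snd_swap]; exact hb, by simp⟩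
  have hdiag : (Finset.univ.filter (fun p : Fin m × Fin m => p.1 = p.2)).card = m := by
    have himg : (Finset.univ.filter (fun p : Fin m × Fin m => p.1 = p.2))
        = Finset.univ.image (fun i : Fin m => (i, i)) := by
      ext p
      simp only [Finset.mem_filter, Finset.mem_univ, true_and, Finset.mem_image, Prod.ext_iff]
      constructor
      · rintro h; exact ⟨p.1, rfl, h⟩
      · rintro ⟨i, h1, h2⟩; rw [← h1, ← h2]
    rw [himg, Finset.card_image_of_injective _ (fun a b hab => (Prod.ext_iff.mp hab).1),
      Finset.card_univ, Fintype.card_fin]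
  have hsplit := Finset.card_filter_add_card_filter_not
    (s := (Finset.univ : Finset (Fin m × Fin m))) (p := fun p => p.1 < p.2)
  have huniv : (Finset.univ : Finset (Fin m × Fin m)).card = m * m := by
    rw [Finset.card_univ, Fintype.card_prod, Fintype.card_fin]
  have hneg : (Finset.univ.filter (fun p : Fin m × Fin m => ¬ p.1 < p.2))
      = (Finset.univ.filter (fun p : Fin m × Fin m => p.2 < p.1))
        ∪ (Finset.univ.filter (fun p : Fin m × Fin m => p.1 = p.2)) := by
    ext p
    simp only [Finset.mem_filter, Finset.mem_univ, true_and, Finset.mem_union, not_lt]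
    constructor
    · intro hle
      rcases lt_or_eq_of_le hle with h | h
      · exact Or.inl h
      · exact Or.inr h.symm
    · rintro (h | h)
      · exact h.le
      · exact h.ge
  have hdisj : Disjoint (Finset.univ.filter (fun p : Fin m × Fin m => p.2 < p.1))
      (Finset.univ.filter (fun p : Fin m × Fin m => p.1 = p.2)) := by
    rw [Finset.disjoint_left]
    intro p h1 h2
    simp only [Finset.mem_filter, Finset.mem_univ, true_and] at h1 h2
    exact absurd (h2 ▸ h1) (lt_irrefl _)
  rw [hneg, Finset.card_union_of_disjoint hdisj, hdiag, huniv] at hsplit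
  omega

noncomputable def shearMap (n : ℕ) : (Fin (n+2) → ℝ) →ₗ[ℝ] (Fin (n+2) → ℝ) :=
  LinearMap.pi (fun i => if i = 0
    then (LinearMap.proj (R := ℝ) (φ := fun _ : Fin (n+2) => ℝ) 0)
    else (LinearMap.proj (R := ℝ) (φ := fun _ : Fin (n+2) => ℝ) i
      - LinearMap.proj (R := ℝ) (φ := fun _ : Fin (n+2) => ℝ) 0))

lemma shearMap_apply (n : ℕ) (t : Fin (n+2) → ℝ) (i : Fin (n+2)) :
    shearMap n t i = if i = 0 then t 0 else t i - t 0 := by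
  by_cases hi : i = 0 <;> simp [shearMap, hi]

lemma shearMap_det (n : ℕ) : LinearMap.det (shearMap n) = 1 := by
  classical
  rw [← LinearMap.det_toMatrix (Pi.basisFun ℝ (Fin (n+2)))]
  have hM : ∀ i j, LinearMap.toMatrix (Pi.basisFun ℝ (Fin (n+2))) (Pi.basisFun ℝ (Fin (n+2)))
      (shearMap n) i j = if i = 0 then (Pi.single (M := fun _ : Fin (n+2) => ℝ) j 1) 0
        else (Pi.single (M := fun _ : Fin (n+2) => ℝ) j 1) i
          - (Pi.single (M := fun _ : Fin (n+2) => ℝ) j 1) 0 := by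
    intro i j
    rw [LinearMap.toMatrix_apply, Pi.basisFun_repr, Pi.basisFun_apply, shearMap_apply]
  have htri : (LinearMap.toMatrix (Pi.basisFun ℝ (Fin (n+2))) (Pi.basisFun ℝ (Fin (n+2)))
      (shearMap n)).BlockTriangular OrderDual.toDual := by
    intro i j hij
    have hij' : i < j := hij
    have hj0 : j ≠ 0 := by
      intro hj
      rw [hj] at hij'
      exact absurd hij' (Fin.not_lt_zero i)
    rw [hM]
    by_cases hi : i = 0
    · rw [if_pos hi, Pi.single_eq_of_ne (Ne.symm hj0)]
    · rw [if_neg hi, Pi.single_eq_of_ne (ne_of_lt hij'), Pi.single_eq_of_ne (Ne.symm hj0),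
        sub_zero]
  rw [Matrix.det_of_lowerTriangular _ htri]
  apply Finset.prod_eq_one
  intro i _
  rw [hM]
  by_cases hi : i = 0
  · rw [if_pos hi, hi, Pi.single_eq_same]
  · rw [if_neg hi, Pi.single_eq_same, Pi.single_eq_of_ne (Ne.symm hi), sub_zero]

set_option maxHeartbeats 1000000 in
theorem stmt12 (m : ℕ) (hm : 2 ≤ m) (α : ℝ) (hα : 0 < α)
    (h : (m : ℝ) * α ^ 2 = 1) :
    ∃ c₀ : ℝ, ∃ ε₀ > (0 : ℝ), ∀ ε : ℝ, 0 < ε → ε < ε₀ →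
      Real.log (1 / ε) - c₀ ≤
        ∫ t in {t : Fin m → ℝ | ∀ i, t i ∈ Set.Ico (0 : ℝ) (2 * π)},
          ∏ p ∈ Finset.univ.filter (fun p : Fin m × Fin m => p.1 < p.2),
            (Real.sin |(t p.1 - t p.2) / 2| + ε) ^ (-2 * α ^ 2) := by
  classical
  obtain ⟨n, rfl⟩ : ∃ n, m = n + 2 := ⟨m - 2, by omega⟩
  set P := Finset.univ.filter (fun p : Fin (n+2) × Fin (n+2) => p.1 < p.2) with hPdef
  have hq : 2 * P.card + (n+2) = (n+2) * (n+2) := by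
    rw [hPdef]; exact two_mul_card_pairs (n+2)
  have hm1 : ((n:ℝ)+2) * α^2 = 1 := by push_cast at h; linarith
  have hc : (P.card : ℝ) * 2 = ((n:ℝ)+2)*((n:ℝ)+1) := by
    have h2 : 2 * P.card = (n+2)*(n+1) := by
      have : (n+2)*(n+2) = (n+2)*(n+1) + (n+2) := by ring
      omega
    calc (P.card:ℝ)*2 = ((2*P.card : ℕ):ℝ) := by push_cast; ring
    _ = ((n:ℝ)+2)*((n:ℝ)+1) := by rw [h2]; push_cast; ring
  have hexp : (-2*α^2) * (P.card:ℝ) = -((n:ℝ)+1) := by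
    linear_combination (-α^2) * hc - ((n:ℝ)+1) * hm1
  have hexpneg : -2*α^2 ≤ 0 := by nlinarith [sq_nonneg α]
  have hπ3 : (3:ℝ) < π := pi_gt_three
  refine ⟨2 * Real.log 4, 1/4, by norm_num, ?_⟩
  intro ε hε hε4
  have hSet : {t : Fin (n+2) → ℝ | ∀ i, t i ∈ Set.Ico (0:ℝ) (2*π)}
      = Set.pi Set.univ (fun _ : Fin (n+2) => Set.Ico (0:ℝ) (2*π)) := by
    ext t; simp [Set.mem_pi]
  rw [hSet]
  set S := Set.pi Set.univ (fun _ : Fin (n+2) => Set.Ico (0:ℝ) (2*π)) with hSdef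
  set g : (Fin (n+2) → ℝ) → ℝ :=
    fun t => ∏ p ∈ P, (Real.sin |(t p.1 - t p.2) / 2| + ε) ^ (-2 * α ^ 2) with hgdef
  -- basic numeric facts
  set N : ℕ := ⌈1/ε⌉₊ with hNdef
  have hNge : (1:ℝ)/ε ≤ N := Nat.le_ceil _
  have hN1 : ((N:ℝ)+1)*ε ≤ 2 := by
    have h1 : (N:ℝ) < 1/ε + 1 := Nat.ceil_lt_add_one (by positivity)
    have h2 : ((N:ℝ)+1)*ε < (1/ε + 2)*ε := by
      apply mul_lt_mul_of_pos_right _ hε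
      linarith
    have h3 : (1/ε + 2)*ε = 1 + 2*ε := by field_simp
    nlinarith
  -- measurability and integrability on S
  have hSmeas : MeasurableSet S := MeasurableSet.univ_pi fun _ => measurableSet_Ico
  have hSfin : volume S ≠ ⊤ := by
    have : volume S = ENNReal.ofReal (2*π - 0) ^ (n+2) := by
      rw [hSdef, volume_pi_pi]
      simp [Real.volume_Ico, Finset.prod_const, Finset.card_univ]
    rw [this]
    exact ENNReal.pow_ne_top ENNReal.ofReal_ne_top
  have hbase : ∀ t ∈ S, ∀ i j : Fin (n+2), ε ≤ Real.sin |(t i - t j)/2| + ε := by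
    intro t ht i j
    have hti := Set.mem_univ_pi.mp ht i
    have htj := Set.mem_univ_pi.mp ht j
    simp only [Set.mem_Ico] at hti htj
    have habs : |t i - t j| ≤ 2*π := by
      rw [abs_sub_le_iff]
      constructor <;> linarith
    have : 0 ≤ Real.sin |(t i - t j)/2| := by
      apply Real.sin_nonneg_of_nonneg_of_le_pi (abs_nonneg _)
      rw [abs_div, abs_two]
      linarith [abs_nonneg (t i - t j)]
    linarith
  have hgmeas : Measurable g := by
    rw [hgdef]
    apply Finset.measurable_prod
    intro p _
    exact ((((measurable_pi_apply p.1).sub (measurable_pi_apply p.2)).div_const 2).abs.sin.add_const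
      ε).pow measurable_const
  have hg_nonneg : ∀ t ∈ S, 0 ≤ g t := by
    intro t ht
    apply Finset.prod_nonneg
    intro p _
    exact Real.rpow_nonneg (le_trans hε.le (hbase t ht p.1 p.2)) _
  have hg_le : ∀ t ∈ S, g t ≤ (ε ^ (-2*α^2)) ^ P.card := by
    intro t ht
    rw [hgdef, ← Finset.prod_const]
    apply Finset.prod_le_prod
    · intro p _
      exact Real.rpow_nonneg (le_trans hε.le (hbase t ht p.1 p.2)) _
    · intro p _
      exact Real.rpow_le_rpow_of_nonpos hε (hbase t ht p.1 p.2) hexpneg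
  have hInt : IntegrableOn g S := by
    apply Measure.integrableOn_of_bounded hSfin hgmeas.aestronglyMeasurable
      (M := (ε ^ (-2*α^2)) ^ P.card)
    apply ae_restrict_of_forall_mem hSmeas
    intro t ht
    rw [Real.norm_eq_abs, abs_of_nonneg (hg_nonneg t ht)]
    exact hg_le t ht
  -- the shells
  set A : ℕ → Set (Fin (n+2) → ℝ) := fun j => (shearMap n) ⁻¹' (Set.pi Set.univ
    (fun i => if i = 0 then Set.Ico (0:ℝ) 1
      else if i = 1 then Set.Ico (((j:ℝ)+1)*ε) (((j:ℝ)+2)*ε)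
      else Set.Ico 0 (((j:ℝ)+2)*ε))) with hAdef
  have h10 : (1 : Fin (n+2)) ≠ 0 := by simp [Fin.ext_iff]
  have hTcont : Continuous (shearMap n) := LinearMap.continuous_of_finiteDimensional _
  have hAmeas : ∀ j, MeasurableSet (A j) := by
    intro j
    apply hTcont.measurable
    apply MeasurableSet.univ_pi
    intro i
    split_ifs <;> exact measurableSet_Ico
  have hmem : ∀ j (t : Fin (n+2) → ℝ), t ∈ A j →
      (0 ≤ t 0 ∧ t 0 < 1) ∧ (((j:ℝ)+1)*ε ≤ t 1 - t 0 ∧ t 1 - t 0 < ((j:ℝ)+2)*ε)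
        ∧ ∀ i, 0 ≤ t i - t 0 ∧ t i - t 0 < ((j:ℝ)+2)*ε := by
    intro j t ht
    simp only [hAdef, Set.mem_preimage, Set.mem_univ_pi] at ht
    have h0 := ht 0
    rw [shearMap_apply, if_pos rfl, if_pos rfl] at h0
    have h1 := ht 1
    rw [shearMap_apply, if_neg h10, if_neg h10, if_pos rfl] at h1
    simp only [Set.mem_Ico] at h0 h1
    refine ⟨h0, h1, ?_⟩
    intro i
    by_cases hi : i = 0
    · rw [hi]
      constructor
      · linarith
      · have : 0 < ((j:ℝ)+2)*ε := by positivity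
        linarith
    · by_cases hi1 : i = 1
      · rw [hi1]
        have : 0 ≤ ((j:ℝ)+1)*ε := by positivity
        exact ⟨by linarith, h1.2⟩
      · have hii := ht i
        rw [shearMap_apply, if_neg hi, if_neg hi, if_neg hi1] at hii
        simpa using hii
  have hjN : ∀ j : ℕ, j < N → ((j:ℝ)+2)*ε ≤ 2 := by
    intro j hj
    have hjle : (j:ℝ)+1 ≤ N := by exact_mod_cast hj
    have : ((j:ℝ)+2)*ε ≤ ((N:ℝ)+1)*ε := by
      apply mul_le_mul_of_nonneg_right _ hε.le
      linarith
    linarith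
  have hsub : ∀ j, j < N → A j ⊆ S := by
    intro j hj t ht
    obtain ⟨H0, H1, Hi⟩ := hmem j t ht
    rw [Set.mem_univ_pi]
    intro i
    simp only [Set.mem_Ico]
    have := Hi i
    have h2 := hjN j hj
    constructor
    · linarith
    · linarith
  -- volume of shells
  have hvol : ∀ j, volume (A j) = ENNReal.ofReal (ε * (((j:ℝ)+2)*ε)^n) := by
    intro j
    rw [hAdef]
    rw [Measure.addHaar_preimage_linearMap volume (by rw [shearMap_det]; norm_num)]
    rw [shearMap_det]
    simp only [inv_one, abs_one, ENNReal.ofReal_one, one_mul]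
    rw [volume_pi_pi]
    have hlen : ∀ i : Fin (n+2),
        volume (if i = 0 then Set.Ico (0:ℝ) 1
          else if i = 1 then Set.Ico (((j:ℝ)+1)*ε) (((j:ℝ)+2)*ε)
          else Set.Ico 0 (((j:ℝ)+2)*ε))
        = ENNReal.ofReal (if i = 0 then (1:ℝ) else if i = 1 then ε else ((j:ℝ)+2)*ε) := by
      intro i
      by_cases hi : i = 0
      · simp [hi, Real.volume_Ico]
      · by_cases hi1 : i = 1
        · rw [if_neg hi, if_neg hi, if_pos hi1, if_pos hi1, Real.volume_Ico]
          congr 1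
          ring
        · simp [hi, hi1, Real.volume_Ico]
    rw [Finset.prod_congr rfl (fun i _ => hlen i)]
    rw [← ENNReal.ofReal_prod_of_nonneg (fun i _ => by split_ifs <;> positivity)]
    congr 1
    rw [← Finset.mul_prod_erase Finset.univ _ (Finset.mem_univ (0 : Fin (n+2)))]
    have h1mem : (1 : Fin (n+2)) ∈ Finset.univ.erase 0 :=
      Finset.mem_erase.mpr ⟨h10, Finset.mem_univ _⟩
    rw [← Finset.mul_prod_erase _ _ h1mem]
    have hrest : ∀ i ∈ (Finset.univ.erase (0:Fin (n+2))).erase 1,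
        (if i = 0 then (1:ℝ) else if i = 1 then ε else ((j:ℝ)+2)*ε) = ((j:ℝ)+2)*ε := by
      intro i hi
      rw [Finset.mem_erase] at hi
      rw [if_neg (Finset.mem_erase.mp hi.2).1, if_neg hi.1]
    rw [Finset.prod_congr rfl hrest]
    rw [Finset.prod_const]
    have hcard : ((Finset.univ.erase (0:Fin (n+2))).erase 1).card = n := by
      rw [Finset.card_erase_of_mem h1mem, Finset.card_erase_of_mem (Finset.mem_univ _),
        Finset.card_univ, Fintype.card_fin]
      omega
    rw [hcard]
    rw [if_pos rfl, if_neg h10, if_pos rfl]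
    ring
  have hvolfin : ∀ j, volume (A j) ≠ ⊤ := by
    intro j; rw [hvol]; exact ENNReal.ofReal_ne_top
  have hvolreal : ∀ j, (volume (A j)).toReal = ε * (((j:ℝ)+2)*ε)^n := by
    intro j; rw [hvol, ENNReal.toReal_ofReal (by positivity)]
  -- disjointness
  have hdisjA : Set.Pairwise ↑(Finset.range N) (Function.onFun Disjoint A) := by
    intro j _ k _ hjk
    apply Set.disjoint_left.mpr
    intro t htj htk
    have Hj := (hmem j t htj).2.1
    have Hk := (hmem k t htk).2.1
    rcases lt_or_gt_of_ne hjk with hlt | hlt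
    · have hnat : j + 2 ≤ k + 1 := by omega
      have hcast : ((j:ℝ)+2) ≤ (k:ℝ)+1 := by exact_mod_cast hnat
      have : ((j:ℝ)+2)*ε ≤ ((k:ℝ)+1)*ε := mul_le_mul_of_nonneg_right hcast hε.le
      linarith [Hj.2, Hk.1]
    · have hnat : k + 2 ≤ j + 1 := by omega
      have hcast : ((k:ℝ)+2) ≤ (j:ℝ)+1 := by exact_mod_cast hnat
      have : ((k:ℝ)+2)*ε ≤ ((j:ℝ)+1)*ε := mul_le_mul_of_nonneg_right hcast hε.le
      linarith [Hk.2, Hj.1]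
  -- pointwise lower bound on shells
  have hlow : ∀ j, j < N → ∀ t ∈ A j, ((((j:ℝ)+4)*ε/2) ^ (n+1))⁻¹ ≤ g t := by
    intro j hj t ht
    obtain ⟨H0, H1, Hi⟩ := hmem j t ht
    have hC : 0 < ((j:ℝ)+4)*ε/2 := by positivity
    have hfac : ∀ p : Fin (n+2) × Fin (n+2), p ∈ P →
        0 < Real.sin |(t p.1 - t p.2)/2| + ε ∧
          Real.sin |(t p.1 - t p.2)/2| + ε ≤ ((j:ℝ)+4)*ε/2 := by
      intro p _
      have h1 := Hi p.1
      have h2 := Hi p.2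
      have habs : |t p.1 - t p.2| ≤ ((j:ℝ)+2)*ε := by
        rw [abs_sub_le_iff]
        constructor <;> linarith [h1.1, h1.2, h2.1, h2.2]
      have habs2 : |(t p.1 - t p.2)/2| ≤ ((j:ℝ)+2)*ε/2 := by
        rw [abs_div, abs_two]
        linarith
      have hle2 : ((j:ℝ)+2)*ε/2 ≤ 1 := by
        have := hjN j hj
        linarith
      have hsin0 : 0 ≤ Real.sin |(t p.1 - t p.2)/2| := by
        apply Real.sin_nonneg_of_nonneg_of_le_pi (abs_nonneg _)
        linarith
      have hsinle : Real.sin |(t p.1 - t p.2)/2| ≤ ((j:ℝ)+2)*ε/2 :=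
        le_trans (Real.sin_le (abs_nonneg _)) habs2
      constructor
      · linarith
      · linarith
    calc ((((j:ℝ)+4)*ε/2) ^ (n+1))⁻¹
        = (((j:ℝ)+4)*ε/2) ^ ((-2*α^2) * (P.card:ℝ)) := by
          rw [hexp, Real.rpow_neg hC.le]
          congr 1
          have : ((n:ℝ)+1) = ((n+1 : ℕ):ℝ) := by push_cast; ring
          rw [this, Real.rpow_natCast]
      _ = ∏ _p ∈ P, (((j:ℝ)+4)*ε/2) ^ (-2*α^2) := by
          rw [Finset.prod_const, ← Real.rpow_natCast ((((j:ℝ)+4)*ε/2) ^ (-2*α^2)) P.card,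
            ← Real.rpow_mul hC.le]
      _ ≤ ∏ p ∈ P, (Real.sin |(t p.1 - t p.2) / 2| + ε) ^ (-2 * α ^ 2) := by
          apply Finset.prod_le_prod
          · intro p _
            exact Real.rpow_nonneg hC.le _
          · intro p hp
            exact Real.rpow_le_rpow_of_nonpos (hfac p hp).1 (hfac p hp).2 hexpneg
  -- per-shell integral bound
  have hshell : ∀ j, j < N → 2/((j:ℝ)+4) ≤ ∫ t in A j, g t := by
    intro j hj
    have hI := setIntegral_ge_of_const_le (hAmeas j) (hvolfin j) (hlow j hj)
      (hInt.mono_set (hsub j hj))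
    refine le_trans ?_ hI
    rw [measureReal_def, hvolreal j, smul_eq_mul]
    have hCpow : 0 < ((((j:ℝ)+4)*ε/2))^(n+1) := by positivity
    rw [← div_eq_mul_inv, le_div_iff₀ hCpow]
    have he1 : ((j:ℝ)+4)*ε/2 = (((j:ℝ)+4)/2)*ε := by ring
    have hone : 2/((j:ℝ)+4) * (((j:ℝ)+4)/2) = 1 := by
      field_simp
    calc 2/((j:ℝ)+4) * ((((j:ℝ)+4)*ε/2)^(n+1))
        = (2/((j:ℝ)+4) * (((j:ℝ)+4)/2)) * ((((j:ℝ)+4)/2)^n * ε^(n+1)) := by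
          rw [he1, mul_pow, pow_succ]
          ring
      _ = (((j:ℝ)+4)/2)^n * ε^(n+1) := by rw [hone, one_mul]
      _ ≤ (((j:ℝ)+2))^n * ε^(n+1) := by
          apply mul_le_mul_of_nonneg_right _ (by positivity)
          apply pow_le_pow_left₀ (by positivity) (by linarith)
      _ = ε * ((((j:ℝ)+2))*ε)^n := by
          rw [mul_pow, pow_succ]
          ring
  -- summation
  have hsum1 : ∑ j ∈ Finset.range N, (2/((j:ℝ)+4)) ≤ ∑ j ∈ Finset.range N, ∫ t in A j, g t :=
    Finset.sum_le_sum (fun j hj => hshell j (Finset.mem_range.mp hj))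
  have hsum2 : ∑ j ∈ Finset.range N, ∫ t in A j, g t = ∫ t in ⋃ j ∈ Finset.range N, A j, g t :=
    (integral_biUnion_finset (Finset.range N) (fun j _ => hAmeas j) hdisjA
      (fun j hj => hInt.mono_set (hsub j (Finset.mem_range.mp hj)))).symm
  have hUsub : (⋃ j ∈ Finset.range N, A j) ⊆ S :=
    Set.iUnion₂_subset fun j hj => hsub j (Finset.mem_range.mp hj)
  have hsum3 : ∫ t in ⋃ j ∈ Finset.range N, A j, g t ≤ ∫ t in S, g t := by
    apply setIntegral_mono_set hInt
    · exact ae_restrict_of_forall_mem hSmeas hg_nonneg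
    · exact HasSubset.Subset.eventuallyLE hUsub
  -- telescoping log sum
  have htel : ∑ j ∈ Finset.range N, (2*(Real.log ((j:ℝ)+5) - Real.log ((j:ℝ)+4)))
      ≤ ∑ j ∈ Finset.range N, (2/((j:ℝ)+4)) := by
    apply Finset.sum_le_sum
    intro j _
    have h45 : Real.log ((j:ℝ)+5) - Real.log ((j:ℝ)+4) = Real.log (((j:ℝ)+5)/((j:ℝ)+4)) :=
      (Real.log_div (by positivity) (by positivity)).symm
    have hlelog := Real.log_le_sub_one_of_pos (show (0:ℝ) < ((j:ℝ)+5)/((j:ℝ)+4) by positivity)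
    have heq : ((j:ℝ)+5)/((j:ℝ)+4) - 1 = 1/((j:ℝ)+4) := by
      field_simp
      norm_num
    rw [h45]
    rw [heq] at hlelog
    have : (2:ℝ)/((j:ℝ)+4) = 2 * (1/((j:ℝ)+4)) := by ring
    rw [this]
    linarith
  have hteleq : ∑ j ∈ Finset.range N, (2*(Real.log ((j:ℝ)+5) - Real.log ((j:ℝ)+4)))
      = 2*(Real.log ((N:ℝ)+4) - Real.log 4) := by
    rw [← Finset.mul_sum]
    congr 1
    have hts := Finset.sum_range_sub (fun j => Real.log ((j:ℝ)+4)) N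
    have : ∑ j ∈ Finset.range N, (Real.log ((j:ℝ)+5) - Real.log ((j:ℝ)+4))
        = ∑ j ∈ Finset.range N, ((fun j : ℕ => Real.log ((j:ℝ)+4)) (j+1)
          - (fun j : ℕ => Real.log ((j:ℝ)+4)) j) := by
      apply Finset.sum_congr rfl
      intro j _
      push_cast
      ring_nf
    rw [this, hts]
    norm_num
  -- final chain
  have hlogN : Real.log (1/ε) ≤ Real.log ((N:ℝ)+4) := by
    apply Real.log_le_log (by positivity)
    linarith
  have hlogpos : 0 ≤ Real.log (1/ε) := by
    apply Real.log_nonneg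
    rw [le_div_iff₀ hε]
    linarith
  linarith [hsum1, hsum2.le, hsum3, htel, hteleq.ge, hlogN, hlogpos]
end
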